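/- arXiv:2410.13913 — 6 statements merged into one kernel-verified Lean document; each statement's English description precedes it below -/
import Mathlib

section
/- For x = (x_1,...,x_n) ∈ ℝ^n and 1 ≤ k ≤ n-1, the normalized elementary symmetric means satisfy E_k(x)^2 ≥ E_{k-1}(x) E_{k+1}(x). -/
open Polynomial

private lemma splits_derivative {p : ℝ[X]} (h : p.Splits) :
    (derivative p).Splits := by
  rcases eq_or_ne (derivative p) 0 with h0 | h0
  · rw [h0]; exact Splits.zero
  have hd : p.natDegree ≠ 0 := by
    intro hd
    exact h0 (by rw [eq_C_of_natDegree_eq_zero hd, derivative_C])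
  have h1 : Multiset.card p.roots = p.natDegree := (splits_iff_card_roots).mp h
  have h2 := Polynomial.card_roots_le_derivative p
  have h3 := Polynomial.card_roots' (derivative p)
  have h4 : (derivative p).natDegree < p.natDegree := natDegree_derivative_lt hd
  rw [splits_iff_card_roots]
  omega

private lemma splits_iterate_derivative {p : ℝ[X]} (h : p.Splits) (m : ℕ) :
    (derivative^[m] p).Splits := by
  induction m with
  | zero => exact h
  | succ m ih => rw [Function.iterate_succ_apply']; exact splits_derivative ih

private lemma natDegree_reflect_le {p : ℝ[X]} {N : ℕ} (h : p.natDegree ≤ N) :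
    (reflect N p).natDegree ≤ N := by
  rw [natDegree_le_iff_coeff_eq_zero]
  intro i hi
  rw [coeff_reflect, revAt_eq_self_of_lt hi]
  exact coeff_eq_zero_of_natDegree_lt (lt_of_le_of_lt h hi)

private lemma splits_reflect_aux (s : Multiset ℝ) :
    ∀ (N : ℕ) (a : ℝ), Multiset.card s ≤ N →
      (reflect N (C a * (s.map fun r => X - C r).prod)).Splits := by
  induction s using Multiset.induction_on with
  | empty =>
      intro N a _
      simp only [Multiset.map_zero, Multiset.prod_zero, mul_one, reflect_C]
      exact Splits.mul (Splits.C _) (Splits.pow Splits.X N)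
  | cons r s ih =>
      intro N a hN
      rw [Multiset.card_cons] at hN
      obtain ⟨M, rfl⟩ : ∃ M, N = M + 1 := ⟨N - 1, by omega⟩
      have hdeg : (C a * (s.map fun r => X - C r).prod).natDegree ≤ M := by
        refine le_trans (natDegree_mul_le) ?_
        have h1 : ((s.map fun r => X - C r).prod).natDegree ≤ Multiset.card s := by
          refine le_trans (natDegree_multiset_prod_le _) ?_
          rw [Multiset.map_map]
          have : ∀ y ∈ s.map (fun r => ((X - C r : ℝ[X]).natDegree)), y ≤ 1 := by
            intro y hy
            obtain ⟨r, _, rfl⟩ := Multiset.mem_map.mp hy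
            simp [natDegree_X_sub_C]
          calc (Multiset.map (natDegree ∘ fun r => X - C r) s).sum
              = (Multiset.map (fun r => (X - C r : ℝ[X]).natDegree) s).sum := rfl
            _ ≤ (Multiset.map (fun _ => 1) s).sum := by
                exact Multiset.sum_map_le_sum_map _ _ fun i _ => by simp [natDegree_X_sub_C]
            _ = Multiset.card s := by simp
        simp only [natDegree_C, zero_add]
        omega
      have hsplit : (C a * (s.map fun r => X - C r).prod) *
          (X - C r) = C a * ((r ::ₘ s).map fun r => X - C r).prod := by
        rw [Multiset.map_cons, Multiset.prod_cons]; ring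
      rw [← hsplit, reflect_mul _ _ hdeg (by simp [natDegree_X_sub_C])]
      refine Splits.mul (ih M a (by omega)) ?_
      exact Splits.of_natDegree_le_one (natDegree_reflect_le (by simp [natDegree_X_sub_C]))

private lemma splits_reflect {p : ℝ[X]} {N : ℕ} (h : p.Splits)
    (hN : p.natDegree ≤ N) : (reflect N p).Splits := by
  rcases eq_or_ne p 0 with rfl | hp
  · rw [reflect_zero]; exact Splits.zero
  have hcard : Multiset.card p.roots ≤ N := le_trans (Polynomial.card_roots' p) hN
  have := Splits.eq_prod_roots h
  rw [this]
  exact splits_reflect_aux p.roots N p.leadingCoeff hcard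

/-- discriminant of a real-rooted quadratic is nonnegative -/
private lemma disc_nonneg {p : ℝ[X]} (hs : p.Splits) (hd : p.natDegree ≤ 2) :
    4 * (p.coeff 0 * p.coeff 2) ≤ p.coeff 1 ^ 2 := by
  by_cases h1 : p.natDegree ≤ 1
  · have hc2 : p.coeff 2 = 0 := coeff_eq_zero_of_natDegree_lt (by omega)
    rw [hc2]
    nlinarith [sq_nonneg (p.coeff 1)]
  · have h2 : p.natDegree = 2 := by omega
    have hr : Multiset.card p.roots = 2 := by rw [splits_iff_card_roots.mp hs, h2]
    obtain ⟨u, v, huv⟩ := Multiset.card_eq_two.mp hr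
    have hp := Splits.eq_prod_roots hs
    rw [huv] at hp
    set a := p.leadingCoeff with ha
    have e2 : p = C a * X ^ 2 + C (-(a * (u + v))) * X + C (a * u * v) := by
      rw [hp]
      simp only [Multiset.insert_eq_cons, Multiset.map_cons, Multiset.prod_cons,
        Multiset.map_singleton, Multiset.prod_singleton, map_neg, map_mul, map_add]
      ring
    have c0 : p.coeff 0 = a * u * v := by rw [e2]; simp
    have c1 : p.coeff 1 = -(a * (u + v)) := by
      rw [e2]; simp [coeff_X_pow]
    have c2 : p.coeff 2 = a := by
      rw [e2]; simp [coeff_X_pow, coeff_C]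
    rw [c0, c1, c2]
    nlinarith [sq_nonneg (a * (u - v))]

private lemma desc_two (m : ℕ) : 2 * ((m + 2).descFactorial m) = (Nat.factorial (m+2)) := by
  induction m with
  | zero => rfl
  | succ m ih =>
      have : (m + 1 + 2) = (m + 2) + 1 := by omega
      rw [this, Nat.succ_descFactorial_succ, Nat.factorial_succ, ← ih]
      ring

private lemma desc_one (m : ℕ) : (m + 1).descFactorial m = (Nat.factorial (m+1)) := by
  induction m with
  | zero => rfl
  | succ m ih => rw [Nat.succ_descFactorial_succ, Nat.factorial_succ, ih]

private lemma key_identity (j m : ℕ) :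
    4 * (((Nat.factorial j) * ((m + 2).descFactorial m)) * (((j + 2).descFactorial j) * (Nat.factorial m))) *
        ((j + m + 2).choose j * (j + m + 2).choose (j + 2)) =
      (((j + 1).descFactorial j) * ((m + 1).descFactorial m))^2 *
        ((j + m + 2).choose (j + 1))^2 := by
  have h5 : (j + m + 2).choose j * (Nat.factorial j) * (Nat.factorial (m+2)) = (Nat.factorial (j+m+2)) := by
    have := Nat.choose_mul_factorial_mul_factorial (show j ≤ j + m + 2 by omega)
    rwa [show j + m + 2 - j = m + 2 by omega] at this
  have h6 : (j + m + 2).choose (j + 2) * (Nat.factorial (j+2)) * (Nat.factorial m) = (Nat.factorial (j+m+2)) := by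
    have := Nat.choose_mul_factorial_mul_factorial (show j + 2 ≤ j + m + 2 by omega)
    rwa [show j + m + 2 - (j + 2) = m by omega] at this
  have h7 : (j + m + 2).choose (j + 1) * (Nat.factorial (j+1)) * (Nat.factorial (m+1)) = (Nat.factorial (j+m+2)) := by
    have := Nat.choose_mul_factorial_mul_factorial (show j + 1 ≤ j + m + 2 by omega)
    rwa [show j + m + 2 - (j + 1) = m + 1 by omega] at this
  calc 4 * (((Nat.factorial j) * ((m + 2).descFactorial m)) * (((j + 2).descFactorial j) * (Nat.factorial m))) *
        ((j + m + 2).choose j * (j + m + 2).choose (j + 2))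
      = (2 * ((m + 2).descFactorial m)) * (2 * ((j + 2).descFactorial j)) *
          ((Nat.factorial j) * (Nat.factorial m) * ((j + m + 2).choose j * (j + m + 2).choose (j + 2))) := by ring
    _ = ((j + m + 2).choose j * (Nat.factorial j) * (Nat.factorial (m+2))) *
          ((j + m + 2).choose (j + 2) * (Nat.factorial (j+2)) * (Nat.factorial m)) := by
        rw [desc_two m, desc_two j]; ring
    _ = (Nat.factorial (j+m+2)) * (Nat.factorial (j+m+2)) := by rw [h5, h6]
    _ = ((j + m + 2).choose (j + 1) * (Nat.factorial (j+1)) * (Nat.factorial (m+1))) *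
          ((j + m + 2).choose (j + 1) * (Nat.factorial (j+1)) * (Nat.factorial (m+1))) := by rw [h7]
    _ = (((j + 1).descFactorial j) * ((m + 1).descFactorial m))^2 *
          ((j + m + 2).choose (j + 1))^2 := by rw [desc_one j, desc_one m]; ring

/-- The k-th elementary symmetric polynomial of `x : Fin n → ℝ`, with the
conventions `σ_0 = 1` and `σ_k = 0` for `k < 0` or `k > n`. -/
noncomputable def esymm (n : ℕ) (x : Fin n → ℝ) (k : ℤ) : ℝ :=
  if 0 ≤ k then ∑ s ∈ (Finset.univ : Finset (Fin n)).powersetCard k.toNat, ∏ i ∈ s, x i else 0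

/-- The normalized elementary symmetric mean `E_k(x) = σ_k(x) / C(n,k)`. -/
noncomputable def Esymm (n : ℕ) (x : Fin n → ℝ) (k : ℤ) : ℝ :=
  esymm n x k / (n.choose k.toNat)

private lemma endgame (S0 S1 S2 : ℝ) (a b c d e f g0 g1 g2 : ℕ)
    (he : 0 < e) (hf : 0 < f) (h0 : 0 < g0) (h1 : 0 < g1) (h2 : 0 < g2)
    (disc : 4 * (((a : ℝ) * ((b : ℝ) * S0)) * ((c : ℝ) * ((d : ℝ) * S2))) ≤
      ((e : ℝ) * ((f : ℝ) * S1)) ^ 2)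
    (hid : 4 * ((a * b) * (c * d)) * (g0 * g2) = (e * f) ^ 2 * g1 ^ 2) :
    S0 / (g0 : ℝ) * (S2 / (g2 : ℝ)) ≤ (S1 / (g1 : ℝ)) ^ 2 := by
  have hid' : (4 : ℝ) * (((a : ℝ) * (b : ℝ)) * ((c : ℝ) * (d : ℝ))) * ((g0 : ℝ) * (g2 : ℝ)) =
      ((e : ℝ) * (f : ℝ)) ^ 2 * (g1 : ℝ) ^ 2 := by exact_mod_cast hid
  have h0' : (0 : ℝ) < (g0 : ℝ) := by exact_mod_cast h0
  have h1' : (0 : ℝ) < (g1 : ℝ) := by exact_mod_cast h1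
  have h2' : (0 : ℝ) < (g2 : ℝ) := by exact_mod_cast h2
  have hef : (0 : ℝ) < (e : ℝ) * (f : ℝ) := by
    have : (0 : ℝ) < (e : ℝ) := by exact_mod_cast he
    have : (0 : ℝ) < (f : ℝ) := by exact_mod_cast hf
    positivity
  rw [div_mul_div_comm, div_pow, div_le_div_iff₀ (by positivity) (by positivity)]
  have hstep : ((e : ℝ) * (f : ℝ)) ^ 2 * (S0 * S2 * (g1 : ℝ) ^ 2) ≤
      ((e : ℝ) * (f : ℝ)) ^ 2 * (S1 ^ 2 * ((g0 : ℝ) * (g2 : ℝ))) := by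
    calc ((e : ℝ) * (f : ℝ)) ^ 2 * (S0 * S2 * (g1 : ℝ) ^ 2)
        = (((e : ℝ) * (f : ℝ)) ^ 2 * (g1 : ℝ) ^ 2) * (S0 * S2) := by ring
      _ = (4 * (((a : ℝ) * (b : ℝ)) * ((c : ℝ) * (d : ℝ))) * ((g0 : ℝ) * (g2 : ℝ)))
            * (S0 * S2) := by rw [← hid']
      _ = (4 * (((a : ℝ) * ((b : ℝ) * S0)) * ((c : ℝ) * ((d : ℝ) * S2))))
            * ((g0 : ℝ) * (g2 : ℝ)) := by ring
      _ ≤ (((e : ℝ) * ((f : ℝ) * S1)) ^ 2) * ((g0 : ℝ) * (g2 : ℝ)) := by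
          apply mul_le_mul_of_nonneg_right disc
          positivity
      _ = ((e : ℝ) * (f : ℝ)) ^ 2 * (S1 ^ 2 * ((g0 : ℝ) * (g2 : ℝ))) := by ring
  exact le_of_mul_le_mul_left hstep (by positivity)

private noncomputable def sig (n : ℕ) (x : Fin n → ℝ) (t : ℕ) : ℝ :=
  ∑ s ∈ (Finset.univ : Finset (Fin n)).powersetCard t, ∏ i ∈ s, x i

private lemma esymm_eq_sig (n : ℕ) (x : Fin n → ℝ) (k : ℤ) (hk : 0 ≤ k) :
    esymm n x k = sig n x k.toNat := by
  rw [esymm, if_pos hk, sig]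

theorem newton_inequality (n k : ℕ) (x : Fin n → ℝ) (hk1 : 1 ≤ k) (hk2 : k ≤ n - 1) :
    Esymm n x k ^ 2 ≥ Esymm n x ((k : ℤ) - 1) * Esymm n x ((k : ℤ) + 1) := by
  obtain ⟨j, rfl⟩ : ∃ j, k = j + 1 := ⟨k - 1, by omega⟩
  obtain ⟨m, rfl⟩ : ∃ m, n = j + m + 2 := ⟨n - (j + 2), by omega⟩
  set p : ℝ[X] := ∏ i : Fin (j + m + 2), (X + C (x i)) with hp
  have hpdeg : p.natDegree = j + m + 2 := by
    rw [hp, natDegree_prod _ _ (fun i _ => X_add_C_ne_zero (x i))]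
    simp [natDegree_X_add_C]
  have hcoeff : ∀ t : ℕ, t ≤ j + m + 2 → p.coeff t = sig (j + m + 2) x (j + m + 2 - t) := by
    intro t ht
    rw [hp, sig]
    have := Finset.prod_X_add_C_coeff (Finset.univ : Finset (Fin (j + m + 2))) x
      (k := t) (by simpa using ht)
    simpa using this
  have hsp : p.Splits :=
    Splits.prod fun i _ => Splits.of_natDegree_le_one (by simp [natDegree_X_add_C])
  set D : ℝ[X] := derivative^[m] p with hD
  have hDdeg : D.natDegree ≤ j + 2 := by
    have h := natDegree_iterate_derivative p m
    rw [← hD] at h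
    omega
  have hDsp : D.Splits := splits_iterate_derivative hsp m
  have hD2 : D.coeff 2 = (((m + 2).descFactorial m : ℕ) : ℝ) * sig (j + m + 2) x j := by
    rw [hD, coeff_iterate_derivative, nsmul_eq_mul, hcoeff _ (by omega),
      show j + m + 2 - (2 + m) = j from by omega, show 2 + m = m + 2 from by omega]
  have hD1 : D.coeff 1 = (((m + 1).descFactorial m : ℕ) : ℝ) * sig (j + m + 2) x (j + 1) := by
    rw [hD, coeff_iterate_derivative, nsmul_eq_mul, hcoeff _ (by omega),
      show j + m + 2 - (1 + m) = j + 1 from by omega, show 1 + m = m + 1 from by omega]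
  have hD0 : D.coeff 0 = ((Nat.factorial m : ℕ) : ℝ) * sig (j + m + 2) x (j + 2) := by
    rw [hD, coeff_iterate_derivative, nsmul_eq_mul, hcoeff _ (by omega),
      show j + m + 2 - (0 + m) = j + 2 from by omega, show 0 + m = m from by omega,
      Nat.descFactorial_self]
  set g : ℝ[X] := reflect (j + 2) D with hg
  have hgsp : g.Splits := splits_reflect hDsp hDdeg
  have hgdeg : g.natDegree ≤ j + 2 := natDegree_reflect_le hDdeg
  set q : ℝ[X] := derivative^[j] g with hq
  have hqsp : q.Splits := splits_iterate_derivative hgsp j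
  have hqdeg : q.natDegree ≤ 2 := by
    have h := natDegree_iterate_derivative g j
    rw [← hq] at h
    omega
  have hgj : g.coeff j = D.coeff 2 := by
    rw [hg, coeff_reflect, revAt_le (by omega : j ≤ j + 2),
      show j + 2 - j = 2 from by omega]
  have hgj1 : g.coeff (1 + j) = D.coeff 1 := by
    rw [hg, coeff_reflect, revAt_le (by omega : 1 + j ≤ j + 2),
      show j + 2 - (1 + j) = 1 from by omega]
  have hgj2 : g.coeff (2 + j) = D.coeff 0 := by
    rw [hg, coeff_reflect, revAt_le (by omega : 2 + j ≤ j + 2),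
      show j + 2 - (2 + j) = 0 from by omega]
  have hq0 : q.coeff 0 = ((Nat.factorial j : ℕ) : ℝ) *
      ((((m + 2).descFactorial m : ℕ) : ℝ) * sig (j + m + 2) x j) := by
    rw [hq, coeff_iterate_derivative, nsmul_eq_mul, show 0 + j = j from by omega, hgj, hD2,
      Nat.descFactorial_self]
  have hq1 : q.coeff 1 = (((j + 1).descFactorial j : ℕ) : ℝ) *
      ((((m + 1).descFactorial m : ℕ) : ℝ) * sig (j + m + 2) x (j + 1)) := by
    rw [hq, coeff_iterate_derivative, nsmul_eq_mul, hgj1, hD1,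
      show 1 + j = j + 1 from by omega]
  have hq2 : q.coeff 2 = (((j + 2).descFactorial j : ℕ) : ℝ) *
      (((Nat.factorial m : ℕ) : ℝ) * sig (j + m + 2) x (j + 2)) := by
    rw [hq, coeff_iterate_derivative, nsmul_eq_mul, hgj2, hD0,
      show 2 + j = j + 2 from by omega]
  have disc := disc_nonneg hqsp hqdeg
  rw [hq0, hq1, hq2] at disc
  have e1 : (0 : ℤ) ≤ ((j + 1 : ℕ) : ℤ) - 1 := by omega
  have e2 : (0 : ℤ) ≤ ((j + 1 : ℕ) : ℤ) + 1 := by omega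
  have e3 : (0 : ℤ) ≤ ((j + 1 : ℕ) : ℤ) := by omega
  have T1 : (((j + 1 : ℕ) : ℤ) - 1).toNat = j := by omega
  have T2 : (((j + 1 : ℕ) : ℤ) + 1).toNat = j + 2 := by omega
  have T3 : (((j + 1 : ℕ) : ℤ)).toNat = j + 1 := by omega
  rw [ge_iff_le, Esymm, Esymm, Esymm, esymm_eq_sig _ _ _ e1, esymm_eq_sig _ _ _ e2,
    esymm_eq_sig _ _ _ e3, T1, T2, T3]
  exact endgame (sig (j + m + 2) x j) (sig (j + m + 2) x (j + 1)) (sig (j + m + 2) x (j + 2))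
    (Nat.factorial j) ((m + 2).descFactorial m) ((j + 2).descFactorial j) (Nat.factorial m)
    ((j + 1).descFactorial j) ((m + 1).descFactorial m)
    ((j + m + 2).choose j) ((j + m + 2).choose (j + 1)) ((j + m + 2).choose (j + 2))
    (by rw [desc_one j]; exact Nat.factorial_pos _)
    (by rw [desc_one m]; exact Nat.factorial_pos _)
    (Nat.choose_pos (by omega)) (Nat.choose_pos (by omega)) (Nat.choose_pos (by omega))
    disc (key_identity j m)
end

section
/- For any real α, β and any z = (z_1,z_2,z_3,z_4) ∈ ℝ^4, define S_k(z) = E_k(z) + (α+β)E_{k-1}(z) + αβ E_{k-2}(z). Then the identity holds: 576[S_3(z)^2 − S_2(z)S_4(z)] = 3∑_{(i,j)} [(z_i − z_j)(z_p + α)(z_q + β) + (z_i − z_j)(z_q + α)(z_p + β)]^2 + 2{[(z_1−z_2)(z_3−z_4)(α−β)]^2 + [(z_1−z_3)(z_2−z_4)(α−β)]^2 + [(z_1−z_4)(z_2−z_3)(α−β)]^2}, where the first sum runs over the six pairs {i,j} ⊂ {1,2,3,4} with {p,q} the complementary pair; in particular S_3(z)^2 ≥ S_2(z)S_4(z). 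-/
/-- `S_k(x) = E_k(x) + (α+β) E_{k-1}(x) + αβ E_{k-2}(x)`. -/
noncomputable def S (n : ℕ) (α β : ℝ) (x : Fin n → ℝ) (k : ℤ) : ℝ :=
  Esymm n x k + (α + β) * Esymm n x (k - 1) + α * β * Esymm n x (k - 2)

lemma esymm0 (z : Fin 4 → ℝ) : esymm 4 z 0 = 1 := by
  rw [esymm, if_pos le_rfl, show ((0:ℤ).toNat) = 0 from rfl]
  rw [show (Finset.univ : Finset (Fin 4)).powersetCard 0 = {∅} from by decide]
  simp

lemma esymm1 (z : Fin 4 → ℝ) : esymm 4 z 1 = z 0 + z 1 + z 2 + z 3 := by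
  rw [esymm, if_pos (by norm_num), show ((1:ℤ).toNat) = 1 from rfl]
  rw [show (Finset.univ : Finset (Fin 4)).powersetCard 1 = {{0},{1},{2},{3}} from by decide]
  repeat rw [Finset.sum_insert (by decide)]
  rw [Finset.sum_singleton]
  repeat rw [Finset.prod_singleton]
  ring

lemma esymm2 (z : Fin 4 → ℝ) :
    esymm 4 z 2 = z 0 * z 1 + z 0 * z 2 + z 0 * z 3 + z 1 * z 2 + z 1 * z 3 + z 2 * z 3 := by
  rw [esymm, if_pos (by norm_num), show ((2:ℤ).toNat) = 2 from rfl]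
  rw [show (Finset.univ : Finset (Fin 4)).powersetCard 2 = {{0,1},{0,2},{0,3},{1,2},{1,3},{2,3}} from by decide]
  repeat rw [Finset.sum_insert (by decide)]
  rw [Finset.sum_singleton]
  repeat rw [Finset.prod_insert (by decide)]
  repeat rw [Finset.prod_singleton]
  ring

lemma esymm3 (z : Fin 4 → ℝ) :
    esymm 4 z 3 = z 0 * z 1 * z 2 + z 0 * z 1 * z 3 + z 0 * z 2 * z 3 + z 1 * z 2 * z 3 := by
  rw [esymm, if_pos (by norm_num), show ((3:ℤ).toNat) = 3 from rfl]
  rw [show (Finset.univ : Finset (Fin 4)).powersetCard 3 = {{0,1,2},{0,1,3},{0,2,3},{1,2,3}} from by decide]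
  repeat rw [Finset.sum_insert (by decide)]
  rw [Finset.sum_singleton]
  repeat rw [Finset.prod_insert (by decide)]
  repeat rw [Finset.prod_singleton]
  ring

lemma esymm4 (z : Fin 4 → ℝ) : esymm 4 z 4 = z 0 * z 1 * z 2 * z 3 := by
  rw [esymm, if_pos (by norm_num), show ((4:ℤ).toNat) = 4 from rfl]
  rw [show (Finset.univ : Finset (Fin 4)).powersetCard 4 = {{0,1,2,3}} from by decide]
  rw [Finset.sum_singleton]
  repeat rw [Finset.prod_insert (by decide)]
  repeat rw [Finset.prod_singleton]
  ring

set_option maxHeartbeats 1000000 in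
theorem S_newton_dim4_identity (α β : ℝ) (z : Fin 4 → ℝ) :
    576 * (S 4 α β z 3 ^ 2 - S 4 α β z 2 * S 4 α β z 4) =
      3 * (((z 0 - z 1) * (z 2 + α) * (z 3 + β) + (z 0 - z 1) * (z 3 + α) * (z 2 + β)) ^ 2
        + ((z 0 - z 2) * (z 1 + α) * (z 3 + β) + (z 0 - z 2) * (z 3 + α) * (z 1 + β)) ^ 2
        + ((z 0 - z 3) * (z 1 + α) * (z 2 + β) + (z 0 - z 3) * (z 2 + α) * (z 1 + β)) ^ 2
        + ((z 1 - z 2) * (z 0 + α) * (z 3 + β) + (z 1 - z 2) * (z 3 + α) * (z 0 + β)) ^ 2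
        + ((z 1 - z 3) * (z 0 + α) * (z 2 + β) + (z 1 - z 3) * (z 2 + α) * (z 0 + β)) ^ 2
        + ((z 2 - z 3) * (z 0 + α) * (z 1 + β) + (z 2 - z 3) * (z 1 + α) * (z 0 + β)) ^ 2)
      + 2 * (((z 0 - z 1) * (z 2 - z 3) * (α - β)) ^ 2
        + ((z 0 - z 2) * (z 1 - z 3) * (α - β)) ^ 2
        + ((z 0 - z 3) * (z 1 - z 2) * (α - β)) ^ 2) ∧
    S 4 α β z 3 ^ 2 ≥ S 4 α β z 2 * S 4 α β z 4 := by
  have h : 576 * (S 4 α β z 3 ^ 2 - S 4 α β z 2 * S 4 α β z 4) =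
      3 * (((z 0 - z 1) * (z 2 + α) * (z 3 + β) + (z 0 - z 1) * (z 3 + α) * (z 2 + β)) ^ 2
        + ((z 0 - z 2) * (z 1 + α) * (z 3 + β) + (z 0 - z 2) * (z 3 + α) * (z 1 + β)) ^ 2
        + ((z 0 - z 3) * (z 1 + α) * (z 2 + β) + (z 0 - z 3) * (z 2 + α) * (z 1 + β)) ^ 2
        + ((z 1 - z 2) * (z 0 + α) * (z 3 + β) + (z 1 - z 2) * (z 3 + α) * (z 0 + β)) ^ 2
        + ((z 1 - z 3) * (z 0 + α) * (z 2 + β) + (z 1 - z 3) * (z 2 + α) * (z 0 + β)) ^ 2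
        + ((z 2 - z 3) * (z 0 + α) * (z 1 + β) + (z 2 - z 3) * (z 1 + α) * (z 0 + β)) ^ 2)
      + 2 * (((z 0 - z 1) * (z 2 - z 3) * (α - β)) ^ 2
        + ((z 0 - z 2) * (z 1 - z 3) * (α - β)) ^ 2
        + ((z 0 - z 3) * (z 1 - z 2) * (α - β)) ^ 2) := by
    have E0 : Esymm 4 z 0 = 1 := by rw [Esymm, esymm0, show ((0:ℤ).toNat) = 0 from rfl]; norm_num
    have E1 : Esymm 4 z 1 = (z 0 + z 1 + z 2 + z 3) / 4 := by rw [Esymm, esymm1, show ((1:ℤ).toNat) = 1 from rfl]; norm_num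
    have E2 : Esymm 4 z 2 = (z 0 * z 1 + z 0 * z 2 + z 0 * z 3 + z 1 * z 2 + z 1 * z 3 + z 2 * z 3) / 6 := by
      rw [Esymm, esymm2, show ((2:ℤ).toNat) = 2 from rfl, show Nat.choose 4 2 = 6 from rfl]; norm_num
    have E3 : Esymm 4 z 3 = (z 0 * z 1 * z 2 + z 0 * z 1 * z 3 + z 0 * z 2 * z 3 + z 1 * z 2 * z 3) / 4 := by
      rw [Esymm, esymm3, show ((3:ℤ).toNat) = 3 from rfl]; norm_num
    have E4 : Esymm 4 z 4 = z 0 * z 1 * z 2 * z 3 := by rw [Esymm, esymm4, show ((4:ℤ).toNat) = 4 from rfl]; norm_num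
    have h2 : S 4 α β z 2 = Esymm 4 z 2 + (α + β) * Esymm 4 z 1 + α * β * Esymm 4 z 0 := by
      rw [S, show (2:ℤ) - 1 = 1 from rfl, show (2:ℤ) - 2 = 0 from rfl]
    have h3 : S 4 α β z 3 = Esymm 4 z 3 + (α + β) * Esymm 4 z 2 + α * β * Esymm 4 z 1 := by
      rw [S, show (3:ℤ) - 1 = 2 from rfl, show (3:ℤ) - 2 = 1 from rfl]
    have h4 : S 4 α β z 4 = Esymm 4 z 4 + (α + β) * Esymm 4 z 3 + α * β * Esymm 4 z 2 := by
      rw [S, show (4:ℤ) - 1 = 3 from rfl, show (4:ℤ) - 2 = 2 from rfl]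
    rw [h2, h3, h4, E0, E1, E2, E3, E4]
    ring
  refine ⟨h, ?_⟩
  have hnn : (0:ℝ) ≤
      3 * (((z 0 - z 1) * (z 2 + α) * (z 3 + β) + (z 0 - z 1) * (z 3 + α) * (z 2 + β)) ^ 2
        + ((z 0 - z 2) * (z 1 + α) * (z 3 + β) + (z 0 - z 2) * (z 3 + α) * (z 1 + β)) ^ 2
        + ((z 0 - z 3) * (z 1 + α) * (z 2 + β) + (z 0 - z 3) * (z 2 + α) * (z 1 + β)) ^ 2
        + ((z 1 - z 2) * (z 0 + α) * (z 3 + β) + (z 1 - z 2) * (z 3 + α) * (z 0 + β)) ^ 2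
        + ((z 1 - z 3) * (z 0 + α) * (z 2 + β) + (z 1 - z 3) * (z 2 + α) * (z 0 + β)) ^ 2
        + ((z 2 - z 3) * (z 0 + α) * (z 1 + β) + (z 2 - z 3) * (z 1 + α) * (z 0 + β)) ^ 2)
      + 2 * (((z 0 - z 1) * (z 2 - z 3) * (α - β)) ^ 2
        + ((z 0 - z 2) * (z 1 - z 3) * (α - β)) ^ 2
        + ((z 0 - z 3) * (z 1 - z 2) * (α - β)) ^ 2) := by positivity
  linarith [h, hnn]
end

section
/- Let α, β ≥ 0 and x ∈ ℝ^n with E_1(x) ≥ 0 and E_2(x) ≥ 0. Then S_1(x)^2 − S_0(x)S_2(x) = E_1(x)^2 − E_2(x) + (α+β)E_1(x) + (α+β)^2 − αβ ≥ 0, where S_k(x) = E_k(x) + (α+β)E_{k-1}(x) + αβE_{k-2}(x). -/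
open Finset

lemma esymm_zero' (n : ℕ) (x : Fin n → ℝ) : esymm n x 0 = 1 := by
  simp [esymm]

lemma esymm_one' (n : ℕ) (x : Fin n → ℝ) : esymm n x 1 = ∑ i, x i := by
  simp [esymm, Finset.powersetCard_one]

lemma card_of_mem_pc2 {n : ℕ} {s : Finset (Fin n)}
    (hs : s ∈ (Finset.univ : Finset (Fin n)).powersetCard 2) : s.card = 2 :=
  (Finset.mem_powersetCard.mp hs).2

lemma sum_pc2 (n : ℕ) (x : Fin n → ℝ) :
    ∑ s ∈ (Finset.univ : Finset (Fin n)).powersetCard 2, ∏ i ∈ s, x i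
      = ∑ p ∈ (Finset.univ ×ˢ Finset.univ : Finset (Fin n × Fin n)).filter
          (fun p => p.1 < p.2), x p.1 * x p.2 := by
  refine (Finset.sum_bij'
    (i := fun (p : Fin n × Fin n) (_ : p ∈ _) => ({p.1, p.2} : Finset (Fin n)))
    (j := fun s hs => (s.min' (Finset.card_pos.mp (by rw [card_of_mem_pc2 hs]; norm_num)),
                       s.max' (Finset.card_pos.mp (by rw [card_of_mem_pc2 hs]; norm_num))))
    ?_ ?_ ?_ ?_ ?_).symm
  · intro p hp
    simp only [Finset.mem_filter] at hp
    rw [Finset.mem_powersetCard]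
    exact ⟨Finset.subset_univ _, Finset.card_pair hp.2.ne⟩
  · intro s hs
    rw [Finset.mem_filter]
    exact ⟨Finset.mem_product.mpr ⟨Finset.mem_univ _, Finset.mem_univ _⟩,
      Finset.min'_lt_max'_of_card s (by rw [card_of_mem_pc2 hs]; norm_num)⟩
  · intro p hp
    simp only [Finset.mem_filter] at hp
    have h1 : ({p.1, p.2} : Finset (Fin n)).min' ⟨p.1, by simp⟩ = p.1 := by
      apply le_antisymm (Finset.min'_le _ _ (by simp))
      apply Finset.le_min'
      intro y hy
      rcases Finset.mem_insert.mp hy with h | h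
      · exact h.ge
      · exact (Finset.mem_singleton.mp h) ▸ hp.2.le
    have h2 : ({p.1, p.2} : Finset (Fin n)).max' ⟨p.1, by simp⟩ = p.2 := by
      apply le_antisymm
      · apply Finset.max'_le
        intro y hy
        rcases Finset.mem_insert.mp hy with h | h
        · exact h ▸ hp.2.le
        · exact (Finset.mem_singleton.mp h).le
      · exact Finset.le_max' _ _ (by simp)
    exact Prod.ext (by simpa using h1) (by simpa using h2)
  · intro s hs
    have hcard := card_of_mem_pc2 hs
    have hne : s.Nonempty := Finset.card_pos.mp (by rw [hcard]; norm_num)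
    have hmin : s.min' hne ∈ s := Finset.min'_mem _ _
    have hmax : s.max' hne ∈ s := Finset.max'_mem _ _
    have hlt : s.min' hne < s.max' hne :=
      Finset.min'_lt_max'_of_card s (by rw [hcard]; norm_num)
    apply Finset.eq_of_subset_of_card_le
    · intro y hy
      rcases Finset.mem_insert.mp hy with h | h
      · exact h ▸ hmin
      · exact (Finset.mem_singleton.mp h) ▸ hmax
    · show s.card ≤ ({s.min' hne, s.max' hne} : Finset (Fin n)).card
      rw [hcard, Finset.card_pair hlt.ne]
  · intro p hp
    simp only [Finset.mem_filter] at hp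
    exact (Finset.prod_pair hp.2.ne).symm

lemma two_esymm_two (n : ℕ) (x : Fin n → ℝ) :
    2 * esymm n x 2 = (∑ i, x i) ^ 2 - ∑ i, (x i) ^ 2 := by
  have h0 : esymm n x 2 = ∑ p ∈ (Finset.univ ×ˢ Finset.univ : Finset (Fin n × Fin n)).filter
      (fun p => p.1 < p.2), x p.1 * x p.2 := by
    rw [esymm]
    norm_num
    exact sum_pc2 n x
  have hswap : ∑ p ∈ (Finset.univ ×ˢ Finset.univ : Finset (Fin n × Fin n)).filter
      (fun p => p.1 < p.2), x p.1 * x p.2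
      = ∑ p ∈ (Finset.univ ×ˢ Finset.univ : Finset (Fin n × Fin n)).filter
      (fun p => p.2 < p.1), x p.1 * x p.2 := by
    refine Finset.sum_nbij' (i := Prod.swap) (j := Prod.swap) ?_ ?_ ?_ ?_ ?_ <;>
      simp [mul_comm, and_comm]
  have hsq : (∑ i, x i) ^ 2 = ∑ p ∈ (Finset.univ ×ˢ Finset.univ : Finset (Fin n × Fin n)),
      x p.1 * x p.2 := by
    rw [sq, Finset.sum_mul_sum, ← Finset.sum_product']
  have hdiag : ∑ p ∈ (Finset.univ ×ˢ Finset.univ : Finset (Fin n × Fin n)).filter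
      (fun p => p.1 = p.2), x p.1 * x p.2 = ∑ i, (x i) ^ 2 := by
    rw [Finset.sum_filter]
    rw [Finset.sum_product]
    simp [Finset.sum_ite_eq, sq]
  have hpt : ∀ p ∈ (Finset.univ ×ˢ Finset.univ : Finset (Fin n × Fin n)),
      x p.1 * x p.2 = (if p.1 < p.2 then x p.1 * x p.2 else 0)
        + (if p.1 = p.2 then x p.1 * x p.2 else 0)
        + (if p.2 < p.1 then x p.1 * x p.2 else 0) := by
    intro p _
    rcases lt_trichotomy p.1 p.2 with h | h | h
    · rw [if_pos h, if_neg h.ne, if_neg (asymm h)]; ring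
    · rw [if_neg (by simp [h]), if_pos h, if_neg (by simp [h])]; ring
    · rw [if_neg (asymm h), if_neg h.ne', if_pos h]; ring
  have hsplit : ∑ p ∈ (Finset.univ ×ˢ Finset.univ : Finset (Fin n × Fin n)), x p.1 * x p.2
      = (∑ p ∈ (Finset.univ ×ˢ Finset.univ : Finset (Fin n × Fin n)).filter
          (fun p => p.1 < p.2), x p.1 * x p.2)
      + (∑ p ∈ (Finset.univ ×ˢ Finset.univ : Finset (Fin n × Fin n)).filter
          (fun p => p.1 = p.2), x p.1 * x p.2)
      + (∑ p ∈ (Finset.univ ×ˢ Finset.univ : Finset (Fin n × Fin n)).filter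
          (fun p => p.2 < p.1), x p.1 * x p.2) := by
    rw [Finset.sum_congr rfl hpt, Finset.sum_add_distrib, Finset.sum_add_distrib,
      ← Finset.sum_filter, ← Finset.sum_filter, ← Finset.sum_filter]
  rw [h0, hsq, hsplit, hdiag, ← hswap]
  ring

lemma newton_E (n : ℕ) (x : Fin n → ℝ) : Esymm n x 2 ≤ (Esymm n x 1) ^ 2 := by
  rcases lt_or_ge n 2 with hn | hn
  · have h2 : Esymm n x 2 = 0 := by
      have hc : ((n.choose (2 : ℤ).toNat : ℕ) : ℝ) = 0 := by
        simp [Nat.choose_eq_zero_of_lt hn]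
      rw [Esymm, hc, div_zero]
    rw [h2]
    positivity
  · have hn0 : (0 : ℝ) < n := by positivity
    have hn1 : (0 : ℝ) < (n : ℝ) - 1 := by
      have : (2 : ℝ) ≤ n := by exact_mod_cast hn
      linarith
    have hch1 : (n.choose 1 : ℝ) = n := by rw [Nat.choose_one_right]
    have hch2 : 2 * (n.choose 2 : ℝ) = n * ((n : ℝ) - 1) := by
      have hdvd : 2 ∣ n * (n - 1) := by
        have he := Nat.even_mul_succ_self (n - 1)
        rw [Nat.sub_add_cancel (by omega : 1 ≤ n)] at he
        have h2 : (2 : ℕ) ∣ (n - 1) * n := he.two_dvd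
        rwa [mul_comm] at h2
      have hnat : 2 * n.choose 2 = n * (n - 1) := by
        rw [Nat.choose_two_right]; exact Nat.mul_div_cancel' hdvd
      have hc := congrArg (Nat.cast : ℕ → ℝ) hnat
      push_cast [Nat.cast_sub (by omega : 1 ≤ n)] at hc
      linarith
    have hcpos : (0 : ℝ) < (n.choose 2 : ℝ) := by nlinarith
    have hE1 : Esymm n x 1 = (∑ i, x i) / n := by
      rw [Esymm]
      norm_num [esymm_one', hch1]
    have hE2 : Esymm n x 2 = ((∑ i, x i) ^ 2 - ∑ i, (x i) ^ 2) / (n * ((n : ℝ) - 1)) := by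
      rw [Esymm]
      show esymm n x 2 / ((n.choose 2 : ℕ) : ℝ) = _
      rw [div_eq_div_iff hcpos.ne' (by positivity)]
      have h2e := two_esymm_two n x
      linear_combination ((n.choose 2 : ℕ) : ℝ) * h2e - esymm n x 2 * hch2
    have hCS : (∑ i, x i) ^ 2 ≤ n * ∑ i, (x i) ^ 2 := by
      have := sq_sum_le_card_mul_sum_sq (s := (univ : Finset (Fin n))) (f := x)
      simpa using this
    rw [hE1, hE2, div_pow, div_le_div_iff₀ (by positivity) (by positivity)]
    nlinarith [mul_nonneg (mul_nonneg (by linarith : (0:ℝ) ≤ n * ∑ i, (x i) ^ 2 - (∑ i, x i) ^ 2)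
      hn1.le) hn0.le]

lemma Esymm_zero' (n : ℕ) (x : Fin n → ℝ) : Esymm n x 0 = 1 := by
  simp [Esymm, esymm_zero']

lemma Esymm_neg (n : ℕ) (x : Fin n → ℝ) (k : ℤ) (hk : k < 0) : Esymm n x k = 0 := by
  simp [Esymm, esymm, not_le.mpr hk]

theorem S1_sq_ge_S0_S2 (n : ℕ) (α β : ℝ) (x : Fin n → ℝ)
    (hα : 0 ≤ α) (hβ : 0 ≤ β) (hE1 : 0 ≤ Esymm n x 1) (hE2 : 0 ≤ Esymm n x 2) :
    S n α β x 1 ^ 2 - S n α β x 0 * S n α β x 2 =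
      Esymm n x 1 ^ 2 - Esymm n x 2 + (α + β) * Esymm n x 1 + (α + β) ^ 2 - α * β ∧
    0 ≤ Esymm n x 1 ^ 2 - Esymm n x 2 + (α + β) * Esymm n x 1 + (α + β) ^ 2 - α * β := by
  constructor
  · have h1 : (1 : ℤ) - 1 = 0 := by norm_num
    have h2 : (1 : ℤ) - 2 = -1 := by norm_num
    have h3 : (0 : ℤ) - 1 = -1 := by norm_num
    have h4 : (0 : ℤ) - 2 = -2 := by norm_num
    have h5 : (2 : ℤ) - 1 = 1 := by norm_num
    have h6 : (2 : ℤ) - 2 = 0 := by norm_num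
    simp only [S, h1, h2, h3, h4, h5, h6, Esymm_zero',
      Esymm_neg n x (-1) (by norm_num), Esymm_neg n x (-2) (by norm_num)]
    ring
  · have hN := newton_E n x
    nlinarith [mul_nonneg (add_nonneg hα hβ) hE1, sq_nonneg (α - β), sq_nonneg (α + β)]
end

section
/- Let α, β ≥ 0 and x ∈ ℝ^n with E_1(x) ≥ 0 and E_2(x) ≥ 0. Then S_2(x)^2 − S_1(x)S_3(x) ≥ αβE_1(x)^2 + α²β² + αβ(α+β)E_1(x) ≥ 0, where S_k(x) = E_k(x) + (α+β)E_{k-1}(x) + αβE_{k-2}(x). -/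
open Finset

section aux

variable (n : ℕ) (x : Fin n → ℝ)

lemma esymm_natCast (m : ℕ) :
    esymm n x (m : ℤ) = MvPolynomial.eval x (MvPolynomial.esymm (Fin n) ℝ m) := by
  rw [esymm, if_pos (Int.natCast_nonneg m), Int.toNat_natCast, MvPolynomial.esymm, map_sum]
  refine Finset.sum_congr rfl fun s _ => ?_
  rw [map_prod]
  simp

lemma eval_psum (m : ℕ) :
    MvPolynomial.eval x (MvPolynomial.psum (Fin n) ℝ m) = ∑ i, x i ^ m := by
  simp [MvPolynomial.psum]

lemma he1 : esymm n x 1 = ∑ i, x i := by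
  have := esymm_natCast n x 1
  rw [MvPolynomial.esymm_one, map_sum] at this
  simpa using this

lemma he2 : 2 * esymm n x 2 = (∑ i, x i) ^ 2 - ∑ i, x i ^ 2 := by
  have h := MvPolynomial.mul_esymm_eq_sum (Fin n) ℝ 2
  have hset : ({a ∈ Finset.HasAntidiagonal.antidiagonal 2 | a.1 < 2} : Finset (ℕ × ℕ)) = {(0, 2), (1, 1)} := by
    decide
  rw [hset, Finset.sum_insert (by decide), Finset.sum_singleton] at h
  have h2 := congrArg (MvPolynomial.eval x) h
  simp only [map_mul, map_pow, map_neg, map_one, map_add, map_natCast,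
    MvPolynomial.esymm_zero, MvPolynomial.esymm_one, map_sum, MvPolynomial.eval_X,
    eval_psum] at h2
  rw [show (2 : ℤ) = ((2 : ℕ) : ℤ) from rfl, esymm_natCast]
  push_cast at h2
  norm_num at h2
  linear_combination h2


lemma he3 : 6 * esymm n x 3 =
    (∑ i, x i) ^ 3 - 3 * (∑ i, x i) * (∑ i, x i ^ 2) + 2 * ∑ i, x i ^ 3 := by
  have h := MvPolynomial.mul_esymm_eq_sum (Fin n) ℝ 3
  have hset : ({a ∈ Finset.HasAntidiagonal.antidiagonal 3 | a.1 < 3} : Finset (ℕ × ℕ))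
      = {(0, 3), (1, 2), (2, 1)} := by decide
  rw [hset, Finset.sum_insert (by decide), Finset.sum_insert (by decide),
    Finset.sum_singleton] at h
  have h2 := congrArg (MvPolynomial.eval x) h
  simp only [map_mul, map_pow, map_neg, map_one, map_add, map_natCast,
    MvPolynomial.esymm_zero, MvPolynomial.esymm_one, map_sum, MvPolynomial.eval_X,
    eval_psum] at h2
  rw [show MvPolynomial.esymm (Fin n) ℝ 2 = MvPolynomial.esymm (Fin n) ℝ ((2:ℤ).toNat) from rfl] at h2
  rw [show (MvPolynomial.eval x) (MvPolynomial.esymm (Fin n) ℝ ((2:ℤ).toNat)) = esymm n x 2 from (esymm_natCast n x 2).symm] at h2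
  rw [show (3 : ℤ) = ((3 : ℕ) : ℤ) from rfl, esymm_natCast]
  push_cast at h2
  norm_num at h2
  have h22 := he2 n x
  linear_combination 2 * h2 + (∑ i, x i) * h22

lemma key_ident :
    ∑ i : Fin n, ∑ j : Fin n,
      (x i - x j) ^ 2 * (((∑ k, x k) - x i - x j) ^ 2 + ((∑ k, x k ^ 2) - x i ^ 2 - x j ^ 2))
    = 2 * (((n : ℝ) - 2) * ((∑ k, x k) ^ 2 - ∑ k, x k ^ 2) ^ 2
        - ((n : ℝ) - 1) * (∑ k, x k) *
          ((∑ k, x k) ^ 3 - 3 * (∑ k, x k) * (∑ k, x k ^ 2) + 2 * ∑ k, x k ^ 3)) := by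
  set p1 := ∑ k, x k with hp1
  set p2 := ∑ k, x k ^ 2 with hp2
  set p3 := ∑ k, x k ^ 3 with hp3
  have hcard : ((Finset.univ : Finset (Fin n)).card : ℝ) = n := by simp
  have sum_cubic : ∀ c3 c2 c1 c0 : ℝ,
      ∑ j : Fin n, (c3 * x j ^ 3 + c2 * x j ^ 2 + c1 * x j + c0)
        = c3 * p3 + c2 * p2 + c1 * p1 + c0 * n := by
    intro c3 c2 c1 c0
    rw [Finset.sum_add_distrib, Finset.sum_add_distrib, Finset.sum_add_distrib,
      ← Finset.mul_sum, ← Finset.mul_sum, ← Finset.mul_sum, Finset.sum_const,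
      nsmul_eq_mul]
    rw [← hp1, ← hp2, ← hp3, Finset.card_univ, Fintype.card_fin]
    ring
  have inner : ∀ i : Fin n,
      ∑ j : Fin n, (x i - x j) ^ 2 * ((p1 - x i - x j) ^ 2 + (p2 - x i ^ 2 - x j ^ 2))
      = (2 * x i - 2 * p1) * p3 + (p2 + p1 ^ 2 + 2 * x i * p1 - 4 * x i ^ 2) * p2
        + (-2 * x i * (p2 + p1 ^ 2) + 2 * x i ^ 2 * p1 + 2 * x i ^ 3) * p1
        + (x i ^ 2 * (p2 + p1 ^ 2) - 2 * x i ^ 3 * p1) * n := by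
    intro i
    rw [Finset.sum_congr rfl fun j _ => show
        (x i - x j) ^ 2 * ((p1 - x i - x j) ^ 2 + (p2 - x i ^ 2 - x j ^ 2))
        = (2 * x i - 2 * p1) * x j ^ 3 + (p2 + p1 ^ 2 + 2 * x i * p1 - 4 * x i ^ 2) * x j ^ 2
          + (-2 * x i * (p2 + p1 ^ 2) + 2 * x i ^ 2 * p1 + 2 * x i ^ 3) * x j
          + (x i ^ 2 * (p2 + p1 ^ 2) - 2 * x i ^ 3 * p1) from by ring]
    exact sum_cubic _ _ _ _
  rw [Finset.sum_congr rfl fun i _ => inner i]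
  rw [Finset.sum_congr rfl fun i _ => show
      (2 * x i - 2 * p1) * p3 + (p2 + p1 ^ 2 + 2 * x i * p1 - 4 * x i ^ 2) * p2
        + (-2 * x i * (p2 + p1 ^ 2) + 2 * x i ^ 2 * p1 + 2 * x i ^ 3) * p1
        + (x i ^ 2 * (p2 + p1 ^ 2) - 2 * x i ^ 3 * p1) * (n : ℝ)
      = ((n : ℝ) * (p2 + p1 ^ 2) - 2 * p1 ^ 2) * x i ^ 3 * 0
        + (2 * p1 - 2 * (n : ℝ) * p1) * x i ^ 3
        + ((n : ℝ) * (p2 + p1 ^ 2) + 2 * p1 ^ 2 - 4 * p2) * x i ^ 2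
        + (2 * p3 - 2 * p1 ^ 3) * x i
        + (p2 * (p2 + p1 ^ 2) - 2 * p1 * p3) from by ring]
  have := sum_cubic ((2 * p1 - 2 * (n : ℝ) * p1)) ((n : ℝ) * (p2 + p1 ^ 2) + 2 * p1 ^ 2 - 4 * p2)
      (2 * p3 - 2 * p1 ^ 3) (p2 * (p2 + p1 ^ 2) - 2 * p1 * p3)
  rw [Finset.sum_congr rfl fun i _ => show
      ((n : ℝ) * (p2 + p1 ^ 2) - 2 * p1 ^ 2) * x i ^ 3 * 0
        + (2 * p1 - 2 * (n : ℝ) * p1) * x i ^ 3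
        + ((n : ℝ) * (p2 + p1 ^ 2) + 2 * p1 ^ 2 - 4 * p2) * x i ^ 2
        + (2 * p3 - 2 * p1 ^ 3) * x i
        + (p2 * (p2 + p1 ^ 2) - 2 * p1 * p3)
      = (2 * p1 - 2 * (n : ℝ) * p1) * x i ^ 3
        + ((n : ℝ) * (p2 + p1 ^ 2) + 2 * p1 ^ 2 - 4 * p2) * x i ^ 2
        + (2 * p3 - 2 * p1 ^ 3) * x i
        + (p2 * (p2 + p1 ^ 2) - 2 * p1 * p3) from by ring, this]
  ring

lemma F_nonneg :
    0 ≤ ((n : ℝ) - 2) * ((∑ k, x k) ^ 2 - ∑ k, x k ^ 2) ^ 2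
        - ((n : ℝ) - 1) * (∑ k, x k) *
          ((∑ k, x k) ^ 3 - 3 * (∑ k, x k) * (∑ k, x k ^ 2) + 2 * ∑ k, x k ^ 3) := by
  have h := key_ident n x
  have hs : 0 ≤ ∑ i : Fin n, ∑ j : Fin n,
      (x i - x j) ^ 2 * (((∑ k, x k) - x i - x j) ^ 2 + ((∑ k, x k ^ 2) - x i ^ 2 - x j ^ 2)) := by
    refine Finset.sum_nonneg fun i _ => Finset.sum_nonneg fun j _ => ?_
    by_cases hij : i = j
    · simp [hij]
    · refine mul_nonneg (sq_nonneg _) (add_nonneg (sq_nonneg _) ?_)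
      have hpair : ∑ k ∈ ({i, j} : Finset (Fin n)), x k ^ 2 = x i ^ 2 + x j ^ 2 :=
        Finset.sum_pair hij
      have hle : ∑ k ∈ ({i, j} : Finset (Fin n)), x k ^ 2 ≤ ∑ k, x k ^ 2 :=
        Finset.sum_le_sum_of_subset_of_nonneg (Finset.subset_univ _)
          (fun k _ _ => sq_nonneg _)
      linarith [hle, hpair]
  linarith

lemma Esymm_zero_of_lt (m : ℕ) (hm : n < m) : Esymm n x (m : ℤ) = 0 := by
  rw [Esymm, esymm, if_pos (Int.natCast_nonneg m), Int.toNat_natCast]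
  rw [Finset.powersetCard_eq_empty.2 (by simpa using hm), Finset.sum_empty, zero_div]

lemma hE0 : Esymm n x 0 = 1 := by
  rw [Esymm, esymm, if_pos le_rfl]
  norm_num

lemma hEneg : Esymm n x (-1) = 0 := by
  rw [Esymm, esymm, if_neg (by norm_num)]
  simp

end aux

lemma choose2nat (n : ℕ) : n.choose 2 * 2 = n * (n - 1) := by
  rw [Nat.choose_two_right]
  exact Nat.div_mul_cancel (Nat.even_mul_pred_self n).two_dvd

lemma choose2aux (m : ℕ) : (m + 1).choose 2 * 2 = (m + 1) * m := by
  have := choose2nat (m + 1)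
  simpa using this

lemma choose3aux (m : ℕ) : (m + 2).choose 3 * 6 = (m + 2) * (m + 1) * m := by
  induction m with
  | zero => rfl
  | succ k ih =>
    rw [show k + 1 + 2 = (k + 2) + 1 from rfl, Nat.choose_succ_succ]
    have h2 := choose2aux (k + 1)
    zify at ih h2 ⊢
    linear_combination (3 : ℤ) * h2 + ih

lemma Esymm_one_eq (n : ℕ) (x : Fin n → ℝ) : Esymm n x 1 = (∑ i, x i) / n := by
  rw [Esymm, Int.toNat_one, Nat.choose_one_right, he1]

lemma newton1 (n : ℕ) (x : Fin n → ℝ) : Esymm n x 2 ≤ Esymm n x 1 ^ 2 := by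
  rcases Nat.lt_or_ge n 2 with hn | hn
  · rw [show (2 : ℤ) = ((2 : ℕ) : ℤ) from rfl, Esymm_zero_of_lt n x 2 hn]
    exact sq_nonneg _
  obtain ⟨m, rfl⟩ : ∃ m, n = m + 2 := ⟨n - 2, by omega⟩
  set p1 := ∑ i, x i with hp1
  set p2 := ∑ i, x i ^ 2 with hp2
  have hcs : p1 ^ 2 ≤ ((m : ℝ) + 2) * p2 := by
    have := sq_sum_le_card_mul_sum_sq (s := (Finset.univ : Finset (Fin (m + 2)))) (f := x)
    rw [Finset.card_univ, Fintype.card_fin] at this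
    push_cast at this
    exact_mod_cast this
  have hc2 : (((m + 2).choose 2 : ℕ) : ℝ) * 2 = ((m : ℝ) + 2) * ((m : ℝ) + 1) := by
    have := choose2aux (m + 1)
    exact_mod_cast this
  have he2' : 2 * esymm (m + 2) x 2 = p1 ^ 2 - p2 := he2 (m + 2) x
  have hc2pos : (0 : ℝ) < (((m + 2).choose 2 : ℕ) : ℝ) := by
    have : 0 < (m + 2).choose 2 := Nat.choose_pos (by omega)
    exact_mod_cast this
  rw [Esymm_one_eq, Esymm, show ((2 : ℤ)).toNat = 2 from rfl]
  rw [div_pow, div_le_div_iff₀ hc2pos (by positivity)]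
  push_cast
  nlinarith [mul_le_mul_of_nonneg_left hcs (by positivity : (0:ℝ) ≤ (m : ℝ) + 2)]

lemma newton2 (n : ℕ) (x : Fin n → ℝ) : Esymm n x 1 * Esymm n x 3 ≤ Esymm n x 2 ^ 2 := by
  rcases Nat.lt_or_ge n 3 with hn | hn
  · rw [show (3 : ℤ) = ((3 : ℕ) : ℤ) from rfl, Esymm_zero_of_lt n x 3 hn]
    rw [mul_zero]
    exact sq_nonneg _
  obtain ⟨m, rfl⟩ : ∃ m, n = m + 3 := ⟨n - 3, by omega⟩
  set p1 := ∑ i, x i with hp1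
  set p2 := ∑ i, x i ^ 2 with hp2
  set p3 := ∑ i, x i ^ 3 with hp3
  have hF := F_nonneg (m + 3) x
  rw [← hp1, ← hp2, ← hp3] at hF
  push_cast at hF
  have hc2 : (((m + 3).choose 2 : ℕ) : ℝ) * 2 = ((m : ℝ) + 3) * ((m : ℝ) + 2) := by
    have := choose2aux (m + 2)
    exact_mod_cast this
  have hc3 : (((m + 3).choose 3 : ℕ) : ℝ) * 6 = ((m : ℝ) + 3) * ((m : ℝ) + 2) * ((m : ℝ) + 1) := by
    have := choose3aux (m + 1)
    exact_mod_cast this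
  have he2' : 2 * esymm (m + 3) x 2 = p1 ^ 2 - p2 := he2 (m + 3) x
  have he3' : 6 * esymm (m + 3) x 3 = p1 ^ 3 - 3 * p1 * p2 + 2 * p3 := he3 (m + 3) x
  have hc2pos : (0 : ℝ) < (((m + 3).choose 2 : ℕ) : ℝ) := by nlinarith
  have hc3pos : (0 : ℝ) < (((m + 3).choose 3 : ℕ) : ℝ) := by nlinarith
  rw [Esymm_one_eq, Esymm, Esymm, show ((2 : ℤ)).toNat = 2 from rfl,
    show ((3 : ℤ)).toNat = 3 from rfl]
  have ee2 : esymm (m + 3) x 2 = (p1 ^ 2 - p2) / 2 := by linarith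
  have ee3 : esymm (m + 3) x 3 = (p1 ^ 3 - 3 * p1 * p2 + 2 * p3) / 6 := by linarith
  have ec2 : (((m + 3).choose 2 : ℕ) : ℝ) = ((m : ℝ) + 3) * ((m : ℝ) + 2) / 2 := by linarith
  have ec3 : (((m + 3).choose 3 : ℕ) : ℝ)
      = ((m : ℝ) + 3) * ((m : ℝ) + 2) * ((m : ℝ) + 1) / 6 := by linarith
  rw [div_pow, div_mul_div_comm, div_le_div_iff₀ (by positivity) (by positivity), ee2, ee3,
    ec2, ec3]
  push_cast
  nlinarith [mul_nonneg (show (0:ℝ) ≤ ((m:ℝ)+3)^2*((m:ℝ)+2) by positivity) hF]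

lemma newton3 (n : ℕ) (x : Fin n → ℝ) (hE1 : 0 ≤ Esymm n x 1) (hE2 : 0 ≤ Esymm n x 2) :
    Esymm n x 3 ≤ Esymm n x 1 * Esymm n x 2 := by
  rcases Nat.lt_or_ge n 3 with hn | hn
  · rw [show (3 : ℤ) = ((3 : ℕ) : ℤ) from rfl, Esymm_zero_of_lt n x 3 hn]
    exact mul_nonneg hE1 hE2
  rcases hE1.eq_or_lt with h0 | hpos
  · -- E1 = 0 : show E3 = 0
    obtain ⟨m, rfl⟩ : ∃ m, n = m + 3 := ⟨n - 3, by omega⟩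
    set p1 := ∑ i, x i with hp1
    set p2 := ∑ i, x i ^ 2 with hp2
    have hp1z : p1 = 0 := by
      rw [Esymm_one_eq] at h0
      have hNpos : (0 : ℝ) < ((m + 3 : ℕ) : ℝ) := by positivity
      field_simp at h0
      linarith [h0]
    have hc2pos : (0 : ℝ) < (((m + 3).choose 2 : ℕ) : ℝ) := by
      have : 0 < (m + 3).choose 2 := Nat.choose_pos (by omega)
      exact_mod_cast this
    have he2' : 2 * esymm (m + 3) x 2 = p1 ^ 2 - p2 := he2 (m + 3) x
    have hE2' : 0 ≤ esymm (m + 3) x 2 := by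
      rw [Esymm, show ((2 : ℤ)).toNat = 2 from rfl] at hE2
      have := mul_nonneg hE2 hc2pos.le
      rwa [div_mul_cancel₀ _ hc2pos.ne'] at this
    have hp2nonneg : 0 ≤ p2 := Finset.sum_nonneg fun i _ => sq_nonneg (x i)
    have hp2z : p2 = 0 := by nlinarith
    have hx : ∀ i, x i = 0 := by
      intro i
      have hz := (Finset.sum_eq_zero_iff_of_nonneg
        (fun i (_ : i ∈ Finset.univ) => sq_nonneg (x i))).1 hp2z i (Finset.mem_univ i)
      exact pow_eq_zero_iff two_ne_zero |>.1 hz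
    have hp3z : (∑ i, x i ^ 3) = 0 := Finset.sum_eq_zero fun i _ => by rw [hx i]; ring
    have he3' : 6 * esymm (m + 3) x 3 = p1 ^ 3 - 3 * p1 * p2 + 2 * ∑ i, x i ^ 3 :=
      he3 (m + 3) x
    have he3z : esymm (m + 3) x 3 = 0 := by
      rw [hp1z, hp2z, hp3z] at he3'
      linarith
    rw [← h0, zero_mul, Esymm, show ((3 : ℤ)).toNat = 3 from rfl, he3z, zero_div]
  · nlinarith [newton2 n x, mul_le_mul_of_nonneg_right (newton1 n x) hE2]

theorem S2_sq_ge_S1_S3 (n : ℕ) (α β : ℝ) (x : Fin n → ℝ)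
    (hα : 0 ≤ α) (hβ : 0 ≤ β) (hE1 : 0 ≤ Esymm n x 1) (hE2 : 0 ≤ Esymm n x 2) :
    S n α β x 2 ^ 2 - S n α β x 1 * S n α β x 3 ≥
      α * β * Esymm n x 1 ^ 2 + α ^ 2 * β ^ 2 + α * β * (α + β) * Esymm n x 1 ∧
    α * β * Esymm n x 1 ^ 2 + α ^ 2 * β ^ 2 + α * β * (α + β) * Esymm n x 1 ≥ 0 := by
  have h1 := newton1 n x
  have h2 := newton2 n x
  have h3 := newton3 n x hE1 hE2
  have hE0' := hE0 n x
  have hEneg' := hEneg n x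
  constructor
  · have expand : S n α β x 2 ^ 2 - S n α β x 1 * S n α β x 3
        = (Esymm n x 2 ^ 2 - Esymm n x 1 * Esymm n x 3)
          + (α ^ 2 + β ^ 2) * (Esymm n x 1 ^ 2 - Esymm n x 2)
          + (α + β) * (Esymm n x 1 * Esymm n x 2 - Esymm n x 3)
          + (α * β * Esymm n x 1 ^ 2 + α ^ 2 * β ^ 2 + α * β * (α + β) * Esymm n x 1) := by
      simp only [S, show (2:ℤ) - 1 = 1 by decide, show (2:ℤ) - 2 = 0 by decide,
        show (1:ℤ) - 1 = 0 by decide, show (1:ℤ) - 2 = -1 by decide,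
        show (3:ℤ) - 1 = 2 by decide, show (3:ℤ) - 2 = 1 by decide]
      rw [hE0', hEneg']
      ring
    rw [ge_iff_le, ← sub_nonneg, expand]
    have t1 : 0 ≤ (α ^ 2 + β ^ 2) * (Esymm n x 1 ^ 2 - Esymm n x 2) :=
      mul_nonneg (by positivity) (by linarith)
    have t2 : 0 ≤ (α + β) * (Esymm n x 1 * Esymm n x 2 - Esymm n x 3) :=
      mul_nonneg (by linarith) (by linarith)
    linarith
  · have t1 : 0 ≤ α * β * Esymm n x 1 ^ 2 :=
      mul_nonneg (mul_nonneg hα hβ) (sq_nonneg _)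
    have t2 : 0 ≤ α * β * (α + β) * Esymm n x 1 :=
      mul_nonneg (mul_nonneg (mul_nonneg hα hβ) (by linarith)) hE1
    nlinarith [sq_nonneg (α * β)]
end

section
/- Let n = k+1 and z ∈ ℝ^n. Then k·n²·(E_k(z)² − E_{k-1}(z)E_{k+1}(z)) = ∑_{1≤i<j≤n} (z_i − z_j)² ∏_{l≠i,j} z_l². -/
open Finset

lemma sum_powersetCard_compl {n m : ℕ} (hm : m ≤ n) (f : Finset (Fin n) → ℝ) :
    ∑ s ∈ (univ : Finset (Fin n)).powersetCard (n - m), f s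
      = ∑ t ∈ (univ : Finset (Fin n)).powersetCard m, f (univ \ t) := by
  refine Finset.sum_nbij' (fun s => univ \ s) (fun t => univ \ t) ?_ ?_ ?_ ?_ ?_
  · intro s hs
    rw [mem_powersetCard] at hs ⊢
    refine ⟨subset_univ _, ?_⟩
    rw [card_sdiff_of_subset (subset_univ _), hs.2, card_univ, Fintype.card_fin]
    omega
  · intro t ht
    rw [mem_powersetCard] at ht ⊢
    refine ⟨subset_univ _, ?_⟩
    rw [card_sdiff_of_subset (subset_univ _), ht.2, card_univ, Fintype.card_fin]
  · intro s hs; simp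
  · intro t ht; simp
  · intro s hs; simp

lemma pair_min' {α : Type*} [LinearOrder α] [DecidableEq α] {a b : α} (h : a < b)
    (hne : ({a, b} : Finset α).Nonempty) : ({a, b} : Finset α).min' hne = a := by
  apply le_antisymm (min'_le _ _ (by simp))
  apply le_min'
  intro y hy
  rcases mem_insert.1 hy with rfl | hy
  · exact le_rfl
  · rw [mem_singleton.1 hy]; exact h.le

lemma pair_max' {α : Type*} [LinearOrder α] [DecidableEq α] {a b : α} (h : a < b)
    (hne : ({a, b} : Finset α).Nonempty) : ({a, b} : Finset α).max' hne = b := by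
  refine le_antisymm ?_ (le_max' _ _ (by simp))
  apply max'_le
  intro y hy
  rcases mem_insert.1 hy with rfl | hy
  · exact h.le
  · rw [mem_singleton.1 hy]

lemma sum_pairs {n : ℕ} (f : Finset (Fin n) → ℝ) :
    ∑ t ∈ (univ : Finset (Fin n)).powersetCard 2, f t
      = ∑ i, ∑ j ∈ univ.filter (fun j => i < j), f {i, j} := by
  rw [Finset.sum_sigma']
  refine (Finset.sum_bij' (fun p _ => ({p.1, p.2} : Finset (Fin n)))
    (fun t ht => ⟨t.min' ?ne, t.max' ?ne⟩) ?_ ?_ ?_ ?_ ?_).symm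
  case ne =>
    rw [mem_powersetCard] at ht
    exact card_pos.1 (by omega)
  · rintro ⟨i, j⟩ hp
    rw [Finset.mem_sigma, mem_filter] at hp
    rw [mem_powersetCard]
    exact ⟨subset_univ _, card_pair hp.2.2.ne⟩
  · intro t ht
    have ht2 := (mem_powersetCard.1 ht).2
    rw [Finset.mem_sigma, mem_filter]
    exact ⟨mem_univ _, mem_univ _, min'_lt_max'_of_card _ (by omega)⟩
  · rintro ⟨i, j⟩ hp
    rw [Finset.mem_sigma, mem_filter] at hp
    have hij : i < j := hp.2.2
    have h1 := pair_min' (α := Fin n) hij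
    have h2 := pair_max' (α := Fin n) hij
    beta_reduce
    rw [h1, h2]
  · intro t ht
    have ht2 := (mem_powersetCard.1 ht).2
    have hne : t.Nonempty := card_pos.1 (by omega)
    have hlt : t.min' hne < t.max' hne := min'_lt_max'_of_card _ (by omega)
    dsimp only
    refine Finset.eq_of_subset_of_card_le ?_ ?_
    · exact insert_subset (min'_mem _ _) (by simp [max'_mem])
    · rw [card_pair hlt.ne]
      exact ht2.le
  · rintro ⟨i, j⟩ hp
    rfl

lemma half_sum {n : ℕ} (F : Fin n → Fin n → ℝ) (hsymm : ∀ i j, F i j = F j i) :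
    2 * ∑ i, ∑ j ∈ univ.filter (fun j => i < j), F i j
      = (∑ i, ∑ j, F i j) - ∑ i, F i i := by
  have hswap : ∑ i, ∑ j ∈ univ.filter (fun j => j < i), F i j
      = ∑ i, ∑ j ∈ univ.filter (fun j => i < j), F i j := by
    simp_rw [Finset.sum_filter]
    rw [Finset.sum_comm]
    refine Finset.sum_congr rfl fun i _ => Finset.sum_congr rfl fun j _ => ?_
    by_cases h : i < j <;> simp [h, hsymm i j]
  have hsplit : ∀ i : Fin n, (∑ j, F i j)
      = F i i + (∑ j ∈ univ.filter (fun j => i < j), F i j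
        + ∑ j ∈ univ.filter (fun j => j < i), F i j) := by
    intro i
    rw [← Finset.sum_filter_add_sum_filter_not univ (fun j => i < j) (F i)]
    have hfe : univ.filter (fun j => ¬ i < j) = insert i (univ.filter (fun j => j < i)) := by
      ext x
      simp only [mem_filter, mem_univ, true_and, not_lt, mem_insert]
      constructor
      · intro h
        rcases h.lt_or_eq with h | h
        · exact Or.inr h
        · exact Or.inl h
      · rintro (rfl | h)
        · exact le_rfl
        · exact h.le
    rw [hfe, Finset.sum_insert (by simp)]
    ring
  rw [Finset.sum_congr rfl fun i _ => hsplit i, Finset.sum_add_distrib,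
    Finset.sum_add_distrib, hswap]
  ring

theorem top_newton_identity (k : ℕ) (z : Fin (k + 1) → ℝ) :
    (k : ℝ) * ((k : ℝ) + 1) ^ 2 *
        (Esymm (k + 1) z k ^ 2 - Esymm (k + 1) z ((k : ℤ) - 1) * Esymm (k + 1) z ((k : ℤ) + 1)) =
      ∑ i : Fin (k + 1), ∑ j ∈ Finset.univ.filter (fun j => i < j),
        (z i - z j) ^ 2 * ∏ l ∈ Finset.univ \ {i, j}, (z l) ^ 2 := by
  rcases Nat.eq_zero_or_pos k with rfl | hk
  · have h0 : ∀ i : Fin 1, (univ.filter (fun j => i < j)) = ∅ := by decide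
    simp only [h0, Finset.sum_empty, Finset.sum_const_zero]
    norm_num
  -- notation
  set a : Fin (k+1) → ℝ := fun i => ∏ l ∈ univ \ {i}, z l with ha
  set b : Fin (k+1) → Fin (k+1) → ℝ := fun i j => ∏ l ∈ univ \ {i, j}, z l with hb
  set P : ℝ := ∏ l, z l with hP
  set S : ℝ := ∑ i, a i with hS
  set B : ℝ := ∑ i, (a i)^2 with hB
  -- pointwise identities
  have haj : ∀ i j : Fin (k+1), i ≠ j → a j = z i * b i j := by
    intro i j hij
    have hset : (univ \ {j}).erase i = univ \ ({i, j} : Finset (Fin (k+1))) := by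
      ext x; simp [Finset.erase_eq]; tauto
    rw [ha, hb]
    dsimp only
    rw [← Finset.mul_prod_erase (univ \ {j}) z (show i ∈ univ \ {j} by simp [hij]), hset]
  have hai : ∀ i j : Fin (k+1), i ≠ j → a i = z j * b i j := by
    intro i j hij
    have : ({j, i} : Finset (Fin (k+1))) = {i, j} := pair_comm j i
    have h := haj j i hij.symm
    rw [h, hb]
    dsimp only
    rw [this]
  have hPa : ∀ i : Fin (k+1), P = z i * a i := by
    intro i
    rw [hP, ha]
    dsimp only
    rw [← Finset.mul_prod_erase univ z (mem_univ i), Finset.erase_eq]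
  -- key per-pair identities
  have key1 : ∀ i j : Fin (k+1), i ≠ j →
      (z i - z j)^2 * ∏ l ∈ univ \ {i, j}, (z l)^2 = (a i - a j)^2 := by
    intro i j hij
    have hprod : ∏ l ∈ univ \ {i, j}, (z l)^2 = (b i j)^2 := by
      rw [hb]; dsimp only; rw [Finset.prod_pow]
    rw [hprod, hai i j hij, haj i j hij]
    ring
  have key2 : ∀ i j : Fin (k+1), i ≠ j → a i * a j = b i j * P := by
    intro i j hij
    rw [hai i j hij, haj i j hij, hPa i, hai i j hij]
    ring
  -- esymm values
  have hesymm_top : esymm (k+1) z ((k:ℤ)+1) = P := by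
    rw [esymm, if_pos (by positivity)]
    have h1 : ((k:ℤ)+1).toNat = (univ : Finset (Fin (k+1))).card := by
      simp [card_univ]
    rw [h1, Finset.powersetCard_self, Finset.sum_singleton]
  have hesymm_k : esymm (k+1) z (k:ℤ) = S := by
    rw [esymm, if_pos (Int.natCast_nonneg k)]
    have h1 : ((k:ℤ)).toNat = (k+1) - 1 := by simp
    rw [h1, sum_powersetCard_compl (m := 1) (by omega) (fun s => ∏ i ∈ s, z i),
      Finset.powersetCard_one, Finset.sum_map]
    rfl
  have hesymm_pred : esymm (k+1) z ((k:ℤ)-1)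
      = ∑ i, ∑ j ∈ univ.filter (fun j => i < j), b i j := by
    rw [esymm, if_pos (by omega)]
    have h1 : ((k:ℤ)-1).toNat = (k+1) - 2 := by omega
    rw [h1, sum_powersetCard_compl (m := 2) (by omega) (fun s => ∏ i ∈ s, z i),
      sum_pairs (fun t => ∏ i ∈ univ \ t, z i)]
  -- global sums
  set Q : ℝ := ∑ i, ∑ j ∈ univ.filter (fun j => i < j), a i * a j with hQ
  set Tb : ℝ := ∑ i, ∑ j ∈ univ.filter (fun j => i < j), b i j with hTb
  have hQ2 : 2 * Q = S^2 - B := by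
    rw [hQ, half_sum (fun i j => a i * a j) (fun i j => mul_comm _ _)]
    have h1 : ∑ i, ∑ j, a i * a j = S * S := (Finset.sum_mul_sum univ univ a a).symm
    have hdiag : ∑ i : Fin (k+1), a i * a i = B := by
      rw [hB]
      exact Finset.sum_congr rfl fun i _ => (sq (a i)).symm
    rw [h1, hdiag]
    ring
  have hTbP : Tb * P = Q := by
    rw [hTb, hQ, Finset.sum_mul]
    refine Finset.sum_congr rfl fun i _ => ?_
    rw [Finset.sum_mul]
    refine Finset.sum_congr rfl fun j hj => ?_
    exact (key2 i j (mem_filter.1 hj).2.ne).symm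
  have hdouble : ∑ i, ∑ j, (a i - a j)^2 = 2*((k:ℝ)+1)*B - 2*S^2 := by
    have hterm : ∀ i j : Fin (k+1), (a i - a j)^2 = a i^2 + a j^2 - 2*(a i * a j) := by
      intros; ring
    simp_rw [hterm, Finset.sum_sub_distrib, Finset.sum_add_distrib, ← Finset.mul_sum,
      Finset.sum_const, card_univ, Fintype.card_fin, nsmul_eq_mul]
    push_cast
    rw [← Finset.mul_sum, ← Finset.sum_mul, ← hS, ← hB]
    ring
  have hR2 : 2 * (∑ i, ∑ j ∈ univ.filter (fun j => i < j), (a i - a j)^2)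
      = 2*((k:ℝ)+1)*B - 2*S^2 := by
    rw [half_sum (fun i j => (a i - a j)^2) (fun i j => by ring)]
    simp [hdouble]
  -- rewrite RHS
  have hRHS : (∑ i : Fin (k + 1), ∑ j ∈ Finset.univ.filter (fun j => i < j),
        (z i - z j) ^ 2 * ∏ l ∈ Finset.univ \ {i, j}, (z l) ^ 2)
      = ∑ i, ∑ j ∈ univ.filter (fun j => i < j), (a i - a j)^2 := by
    refine Finset.sum_congr rfl fun i _ => Finset.sum_congr rfl fun j hj => ?_
    exact key1 i j (mem_filter.1 hj).2.ne
  rw [hRHS]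
  -- choose values
  have hchoose_k : ((k+1).choose ((k:ℤ)).toNat : ℝ) = (k:ℝ) + 1 := by
    simp [Nat.choose_succ_self_right]
  have hchoose_top : ((k+1).choose (((k:ℤ)+1)).toNat : ℝ) = 1 := by
    have : (((k:ℤ)+1)).toNat = k+1 := by omega
    simp [this]
  have hchoose2 : 2 * ((k+1).choose (((k:ℤ)-1)).toNat) = (k+1)*k := by
    have h1 : (((k:ℤ)-1)).toNat = (k+1) - 2 := by omega
    rw [h1, Nat.choose_symm (by omega)]
    rw [Nat.choose_two_right]
    have hdvd : 2 ∣ (k+1) * ((k+1)-1) := by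
      have := (Nat.even_mul_succ_self k).two_dvd
      simpa [Nat.mul_comm] using this
    rw [Nat.mul_div_cancel' hdvd]
    rfl
  have hchooseR : ((k+1).choose (((k:ℤ)-1)).toNat : ℝ) = ((k:ℝ)+1)*(k:ℝ)/2 := by
    have := congrArg (fun n : ℕ => (n : ℝ)) hchoose2
    push_cast at this
    linarith
  have hk0 : (k:ℝ) ≠ 0 := Nat.cast_ne_zero.2 hk.ne'
  have hk1 : (k:ℝ) + 1 ≠ 0 := by positivity
  rw [Esymm, Esymm, Esymm, hesymm_top, hesymm_k, hesymm_pred,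
    hchoose_k, hchoose_top, hchooseR]
  have hmain : (k:ℝ)*S^2 - 2*((k:ℝ)+1)*(Tb*P)
      = ∑ i, ∑ j ∈ univ.filter (fun j => i < j), (a i - a j)^2 := by
    rw [hTbP]
    linear_combination (-(k:ℝ)-1) * hQ2 - (1/2) * hR2
  rw [← hmain]
  field_simp
end

section
/- Let n = k+1, s = k−1, α ∈ ℝ, and z ∈ ℝ^n. Define S_{m;s}(z) = ∑_{i=0}^{s} C(s,i) α^i E_{m-i}(z). Then S_{k;s}(z)² − S_{k-1;s}(z)S_{k+1;s}(z) = E_k(z+αe)² − E_{k-1}(z+αe)E_{k+1}(z+αe), where e = (1,1,...,1) ∈ ℝ^n. -/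
/-- `S_{m;s}(x) = ∑_{i=0}^{s} C(s,i) α^i E_{m-i}(x)`. -/
noncomputable def Ss (n : ℕ) (α : ℝ) (x : Fin n → ℝ) (s : ℕ) (m : ℤ) : ℝ :=
  ∑ i ∈ Finset.range (s + 1), (s.choose i : ℝ) * α ^ i * Esymm n x (m - i)

open Finset Polynomial

noncomputable def sg (n : ℕ) (x : Fin n → ℝ) (m : ℕ) : ℝ :=
  ∑ s ∈ (Finset.univ : Finset (Fin n)).powersetCard m, ∏ i ∈ s, x i

noncomputable def En (n : ℕ) (x : Fin n → ℝ) (m : ℕ) : ℝ := sg n x m / (n.choose m)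

noncomputable def Sn (n : ℕ) (α : ℝ) (x : Fin n → ℝ) (s m : ℕ) : ℝ :=
  ∑ i ∈ Finset.range (s + 1), (s.choose i : ℝ) * α ^ i * En n x (m - i)

lemma sg_coeff (n : ℕ) (x : Fin n → ℝ) (m : ℕ) (hm : m ≤ n) :
    (∏ i : Fin n, (X + C (x i))).coeff (n - m) = sg n x m := by
  rw [Finset.prod_X_add_C_coeff _ x (by simp [Nat.sub_le] : n - m ≤ #(Finset.univ : Finset (Fin n)))]
  simp [sg, Nat.sub_sub_self hm]

lemma sigma_trans (n m : ℕ) (hm : m ≤ n) (z : Fin n → ℝ) (α : ℝ) :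
    sg n (fun i => z i + α) m
      = ∑ l ∈ Finset.range (m + 1), ((n - m + l).choose l : ℝ) * α ^ l * sg n z (m - l) := by
  set P : Polynomial ℝ := ∏ i : Fin n, (X + C (z i)) with hPdef
  have hcomp : (∏ i : Fin n, (X + C (z i + α))) = Polynomial.taylor α P := by
    rw [taylor_apply, hPdef, Polynomial.prod_comp]
    refine Finset.prod_congr rfl fun i _ => ?_
    simp [add_comp, add_assoc]
    ring
  have h1 : sg n (fun i => z i + α) m = (Polynomial.taylor α P).coeff (n - m) := by
    rw [← hcomp, sg_coeff n (fun i => z i + α) m hm]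
  rw [h1, taylor_coeff]
  have hdeg : (hasseDeriv (n - m) P).natDegree < m + 1 := by
    have h2 : P.natDegree ≤ n := by
      refine le_trans (natDegree_prod_le _ _) ?_
      simp [natDegree_X_add_C]
    refine lt_of_le_of_lt (le_trans (natDegree_hasseDeriv_le P (n - m)) ?_) (Nat.lt_succ_self m)
    omega
  rw [eval_eq_sum_range' hdeg]
  refine Finset.sum_congr rfl fun l hl => ?_
  rw [Finset.mem_range] at hl
  have hl' : l ≤ m := Nat.lt_succ_iff.mp hl
  rw [hasseDeriv_coeff]
  have e1 : l + (n - m) = n - (m - l) := by omega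
  rw [e1, sg_coeff n z (m - l) (by omega)]
  have e2 : (n - (m - l)).choose (n - m) = (n - m + l).choose l := by
    have : n - (m - l) = n - m + l := by omega
    rw [this, ← Nat.choose_symm (Nat.le_add_right _ _)]
    congr 1
    omega
  rw [e2]
  ring

lemma En_trans (n m : ℕ) (hm : m ≤ n) (z : Fin n → ℝ) (α : ℝ) :
    En n (fun i => z i + α) m = Sn n α z m m := by
  unfold En Sn
  rw [sigma_trans n m hm, Finset.sum_div]
  refine Finset.sum_congr rfl fun l hl => ?_
  rw [Finset.mem_range] at hl
  have hl' : l ≤ m := Nat.lt_succ_iff.mp hl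
  have key : ((n - m + l).choose l : ℝ) * (n.choose (m - l)) = (m.choose l) * (n.choose m) := by
    have h := Nat.choose_mul (n := n) (Nat.sub_le m l)
    have h3 : n - (m - l) = n - m + l := by omega
    have h4 : m - (m - l) = l := by omega
    have h2' : m.choose (m - l) = m.choose l := by
      rw [← Nat.choose_symm hl']
    rw [h3, h4, h2'] at h
    have h5 := congrArg (Nat.cast : ℕ → ℝ) h
    push_cast at h5
    linarith
  have hcm : (0:ℝ) < (n.choose m : ℝ) := by exact_mod_cast Nat.choose_pos hm
  have hcml : (0:ℝ) < (n.choose (m - l) : ℝ) := by exact_mod_cast Nat.choose_pos (le_trans (Nat.sub_le m l) hm)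
  rw [show En n z (m - l) = sg n z (m - l) / (n.choose (m - l)) from rfl]
  field_simp
  linear_combination α ^ l * sg n z (m - l) * key

lemma Esymm_natCast (n : ℕ) (x : Fin n → ℝ) (m : ℕ) : Esymm n x (m : ℤ) = En n x m := by
  simp [Esymm, esymm, En, sg]

lemma Ss_eq_Sn (n : ℕ) (α : ℝ) (x : Fin n → ℝ) (s m : ℕ) (hsm : s ≤ m) :
    Ss n α x s (m : ℤ) = Sn n α x s m := by
  unfold Ss Sn
  refine Finset.sum_congr rfl fun i hi => ?_
  rw [Finset.mem_range] at hi
  have him : i ≤ m := le_trans (Nat.lt_succ_iff.mp hi) hsm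
  have : (m : ℤ) - i = ((m - i : ℕ) : ℤ) := by omega
  rw [this, Esymm_natCast]

lemma Sn_pascal (n : ℕ) (α : ℝ) (x : Fin n → ℝ) (s m : ℕ) :
    Sn n α x (s + 1) m = Sn n α x s m + α * Sn n α x s (m - 1) := by
  unfold Sn
  rw [Finset.sum_range_succ' _ (s + 1)]
  have step : ∀ i ∈ Finset.range (s + 1),
      ((s + 1).choose (i + 1) : ℝ) * α ^ (i + 1) * En n x (m - (i + 1))
        = (s.choose (i + 1) : ℝ) * α ^ (i + 1) * En n x (m - (i + 1))
          + α * ((s.choose i : ℝ) * α ^ i * En n x (m - 1 - i)) := by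
    intro i _
    have hc : ((s + 1).choose (i + 1) : ℝ) = (s.choose i : ℝ) + (s.choose (i + 1) : ℝ) := by
      exact_mod_cast congrArg (Nat.cast : ℕ → ℝ) (Nat.choose_succ_succ s i)
    have hsub : m - (i + 1) = m - 1 - i := by omega
    rw [hc, hsub]
    ring
  rw [Finset.sum_congr rfl step, Finset.sum_add_distrib, ← Finset.mul_sum]
  have h0 : ((s + 1).choose 0 : ℝ) * α ^ 0 * En n x (m - 0) = (s.choose 0 : ℝ) * α ^ 0 * En n x (m - 0) := by
    norm_num
  have h1 : (∑ i ∈ Finset.range (s + 1), (s.choose (i + 1) : ℝ) * α ^ (i + 1) * En n x (m - (i + 1)))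
        + (s.choose 0 : ℝ) * α ^ 0 * En n x (m - 0)
      = ∑ i ∈ Finset.range (s + 1), (s.choose i : ℝ) * α ^ i * En n x (m - i) := by
    rw [← Finset.sum_range_succ' (fun i => (s.choose i : ℝ) * α ^ i * En n x (m - i)) (s + 1)]
    rw [Finset.sum_range_succ]
    simp [Nat.choose_succ_self]
  linarith [h1, h0]

theorem Ss_translation_identity (k : ℕ) (hk : 1 ≤ k) (α : ℝ) (z : Fin (k + 1) → ℝ) :
    Ss (k + 1) α z (k - 1) k ^ 2
        - Ss (k + 1) α z (k - 1) ((k : ℤ) - 1) * Ss (k + 1) α z (k - 1) ((k : ℤ) + 1) =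
      Esymm (k + 1) (fun i => z i + α) k ^ 2
        - Esymm (k + 1) (fun i => z i + α) ((k : ℤ) - 1)
          * Esymm (k + 1) (fun i => z i + α) ((k : ℤ) + 1) := by
  have bm : Ss (k + 1) α z (k - 1) (k : ℤ) = Sn (k + 1) α z (k - 1) k :=
    Ss_eq_Sn _ _ _ _ _ (Nat.sub_le k 1)
  have bm1 : Ss (k + 1) α z (k - 1) ((k : ℤ) - 1) = Sn (k + 1) α z (k - 1) (k - 1) := by
    have h : (k : ℤ) - 1 = ((k - 1 : ℕ) : ℤ) := by omega
    rw [h]; exact Ss_eq_Sn _ _ _ _ _ le_rfl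
  have bp1 : Ss (k + 1) α z (k - 1) ((k : ℤ) + 1) = Sn (k + 1) α z (k - 1) (k + 1) := by
    have h : (k : ℤ) + 1 = ((k + 1 : ℕ) : ℤ) := by push_cast; ring
    rw [h]; exact Ss_eq_Sn _ _ _ _ _ (by omega)
  have em : Esymm (k + 1) (fun i => z i + α) (k : ℤ) = Sn (k + 1) α z k k := by
    rw [Esymm_natCast, En_trans _ _ (by omega)]
  have em1 : Esymm (k + 1) (fun i => z i + α) ((k : ℤ) - 1) = Sn (k + 1) α z (k - 1) (k - 1) := by
    have h : (k : ℤ) - 1 = ((k - 1 : ℕ) : ℤ) := by omega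
    rw [h, Esymm_natCast, En_trans _ _ (by omega)]
  have ep1 : Esymm (k + 1) (fun i => z i + α) ((k : ℤ) + 1) = Sn (k + 1) α z (k + 1) (k + 1) := by
    have h : (k : ℤ) + 1 = ((k + 1 : ℕ) : ℤ) := by push_cast; ring
    rw [h, Esymm_natCast, En_trans _ _ (by omega)]
  have p1 : Sn (k + 1) α z k k = Sn (k + 1) α z (k - 1) k + α * Sn (k + 1) α z (k - 1) (k - 1) := by
    have h := Sn_pascal (k + 1) α z (k - 1) k
    rwa [show k - 1 + 1 = k by omega] at h
  have p2 : Sn (k + 1) α z k (k + 1)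
      = Sn (k + 1) α z (k - 1) (k + 1) + α * Sn (k + 1) α z (k - 1) k := by
    have h := Sn_pascal (k + 1) α z (k - 1) (k + 1)
    rwa [show k - 1 + 1 = k by omega, show k + 1 - 1 = k from rfl] at h
  have p3 : Sn (k + 1) α z (k + 1) (k + 1)
      = Sn (k + 1) α z k (k + 1) + α * Sn (k + 1) α z k k := by
    have h := Sn_pascal (k + 1) α z k (k + 1)
    rwa [show k + 1 - 1 = k from rfl] at h
  rw [bm, bm1, bp1, em, em1, ep1, p3, p2, p1]
  ring
end
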